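/- Let n = a_1 · a_2 · ... · a_k with k ≥ 2, where the positive integers a_1, ..., a_k are pairwise coprime. Then a_1^{φ(n/a_1)} + a_2^{φ(n/a_2)} + ... + a_k^{φ(n/a_k)} ≡ k − 1 (mod n). -/

import Mathlib

lemma sum_modEq_aux {α : Type*} (s : Finset α) (f g : α → ℕ) (m : ℕ)
    (h : ∀ i ∈ s, f i ≡ g i [MOD m]) : ∑ i ∈ s, f i ≡ ∑ i ∈ s, g i [MOD m] := by
  classical
  induction s using Finset.induction with
  | empty => rfl
  | insert x s' hx ih =>
    rw [Finset.sum_insert hx, Finset.sum_insert hx]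
    exact (h x (Finset.mem_insert_self x s')).add (ih fun i hi => h i (Finset.mem_insert_of_mem hi))

/-- Da Silva's generalization of Euler's theorem: if `n = a 1 ⋯ a k` with the
`a i` pairwise coprime (`k ≥ 2`), then
`∑ i, (a i)^{φ(n / a i)} ≡ k - 1 (mod n)`. -/
theorem stmt_9 (k : ℕ) (hk : 2 ≤ k) (a : Fin k → ℕ) (ha : ∀ i, 0 < a i)
    (hcop : ∀ i j, i ≠ j → Nat.Coprime (a i) (a j)) (n : ℕ)
    (hn : n = ∏ i, a i) :
    ∑ i, a i ^ (n / a i).totient ≡ k - 1 [MOD n] := by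
  classical
  have hnpos : 0 < n := by
    rw [hn]; exact Finset.prod_pos fun i _ => ha i
  have hdvd : ∀ i, a i ∣ n := fun i => hn ▸ Finset.dvd_prod_of_mem a (Finset.mem_univ i)
  -- key: for each j, a j divides n / a i for i ≠ j
  have hkey : ∀ j, ∑ i, a i ^ (n / a i).totient ≡ k - 1 [MOD a j] := by
    intro j
    have h1 : ∀ i ∈ Finset.univ.erase j, a i ^ (n / a i).totient ≡ 1 [MOD a j] := by
      intro i hi
      have hij : i ≠ j := (Finset.mem_erase.mp hi).1
      have haj_dvd : a j ∣ n / a i := by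
        have h2 : a i * (n / a i) = n := Nat.mul_div_cancel' (hdvd i)
        have h3 : a j ∣ (n / a i) * a i := by rw [mul_comm, h2]; exact hdvd j
        exact Nat.Coprime.dvd_of_dvd_mul_right (hcop j i (Ne.symm hij)) h3
      have htdvd : (a j).totient ∣ (n / a i).totient := Nat.totient_dvd_of_dvd haj_dvd
      obtain ⟨t, ht⟩ := htdvd
      rw [ht, pow_mul]
      calc (a i ^ (a j).totient) ^ t ≡ 1 ^ t [MOD a j] :=
            Nat.ModEq.pow t (Nat.ModEq.pow_totient (hcop i j hij))
        _ = 1 := one_pow t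
    have h2 : a j ^ (n / a j).totient ≡ 0 [MOD a j] := by
      have hpos : 0 < (n / a j).totient :=
        Nat.totient_pos.mpr (Nat.div_pos (Nat.le_of_dvd hnpos (hdvd j)) (ha j))
      exact (Nat.modEq_zero_iff_dvd).mpr (dvd_pow_self (a j) hpos.ne')
    have hsum : ∑ i ∈ Finset.univ.erase j, a i ^ (n / a i).totient
        ≡ ∑ _i ∈ Finset.univ.erase j, 1 [MOD a j] :=
      sum_modEq_aux _ _ _ _ h1
    have hcard : ∑ _i ∈ Finset.univ.erase j, (1 : ℕ) = k - 1 := by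
      rw [Finset.sum_const, smul_eq_mul, mul_one, Finset.card_erase_of_mem (Finset.mem_univ j),
        Finset.card_univ, Fintype.card_fin]
    have := (hsum.add h2)
    rw [hcard, add_zero] at this
    calc ∑ i, a i ^ (n / a i).totient
        = ∑ i ∈ Finset.univ.erase j, a i ^ (n / a i).totient + a j ^ (n / a j).totient := by
          rw [Finset.sum_erase_add _ _ (Finset.mem_univ j)]
      _ ≡ k - 1 [MOD a j] := this
  -- combine via coprimality
  rw [Nat.modEq_iff_dvd]
  conv_lhs => rw [hn, Nat.cast_prod]
  refine Finset.prod_dvd_of_coprime (fun i _ j _ hij => ?_) (fun j _ => ?_)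
  · exact (Nat.isCoprime_iff_coprime.mpr (hcop i j hij))
  · exact Nat.modEq_iff_dvd.mp (hkey j)
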